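/- (Thompson construction size bounds.) For every regular expression R over an alphabet Σ with m nodes in its syntax tree, there exists an ε-NFA A with at most 2m states, whose set of transitions (triples (s, x, t) with x ∈ Σ ∪ {ε} and t ∈ step(s, x)) is finite of cardinality at most 4m, and whose accepted language equals L(R). -/

import Mathlib

/-- The size of a regular expression: the number of nodes of its syntax tree. -/
def reSize {α : Type} : RegularExpression α → ℕ
  | .zero => 1
  | .epsilon => 1
  | .char _ => 1
  | .plus S T => reSize S + reSize T + 1
  | .comp S T => reSize S + reSize T + 1
  | .star S => reSize S + 1

open Set Computability

namespace ThompsonAux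

variable {α : Type} {σ σ' : Type}

inductive EPath (A : εNFA α σ) : σ → σ → List α → Prop
  | nil (s : σ) : EPath A s s []
  | eps {s t u : σ} {w : List α} : t ∈ A.step s none → EPath A t u w → EPath A s u w
  | cons {s t u : σ} {a : α} {w : List α} :
      t ∈ A.step s (some a) → EPath A t u w → EPath A s u (a :: w)

theorem EPath.trans {A : εNFA α σ} {s t u : σ} {w1 w2 : List α}
    (h1 : EPath A s t w1) (h2 : EPath A t u w2) : EPath A s u (w1 ++ w2) := by
  induction h1 with
  | nil => simpa
  | eps h _ ih => exact .eps h (ih h2)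
  | cons h _ ih => exact .cons h (ih h2)

theorem epath_nil_closure {A : εNFA α σ} {S : Set σ} {s t : σ} {w : List α}
    (p : EPath A s t w) (hw : w = []) (hs : s ∈ A.εClosure S) : t ∈ A.εClosure S := by
  induction p with
  | nil => exact hs
  | eps h _ ih => exact ih hw (εNFA.εClosure.step _ _ h hs)
  | cons h _ _ => simp at hw

theorem mem_εClosure_iff {A : εNFA α σ} {S : Set σ} {t : σ} :
    t ∈ A.εClosure S ↔ ∃ s ∈ S, EPath A s t [] := by
  constructor
  · intro h
    induction h with
    | base s hs => exact ⟨s, hs, .nil s⟩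
    | step s t ht _ ih =>
      obtain ⟨u, hu, p⟩ := ih
      exact ⟨u, hu, by simpa using p.trans (.eps ht (.nil t))⟩
  · rintro ⟨s, hs, p⟩
    exact epath_nil_closure p rfl (εNFA.εClosure.base s hs)

theorem εClosure_stepSet' {A : εNFA α σ} (S : Set σ) (a : α) :
    A.εClosure (A.stepSet S a) = A.stepSet S a := by
  apply Subset.antisymm _ (εNFA.subset_εClosure _ _)
  intro t ht
  induction ht with
  | base s hs => exact hs
  | step s t ht _ ih =>
    rw [εNFA.mem_stepSet_iff] at ih ⊢
    obtain ⟨u, hu, hc⟩ := ih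
    exact ⟨u, hu, εNFA.εClosure.step _ _ ht hc⟩

theorem epath_cons {A : εNFA α σ} {s t : σ} {a : α} {w' w : List α}
    (p : EPath A s t w) (hw : w = a :: w') :
    ∃ v u, EPath A s v [] ∧ u ∈ A.step v (some a) ∧ EPath A u t w' := by
  induction p with
  | nil => simp at hw
  | eps h _ ih =>
    obtain ⟨v, u, p1, hs, p2⟩ := ih hw
    exact ⟨v, u, .eps h p1, hs, p2⟩
  | cons h p _ =>
    obtain ⟨rfl, rfl⟩ : _ ∧ _ := by constructor <;> [exact (List.cons.injEq _ _ _ _ ▸ hw).1; exact (List.cons.injEq _ _ _ _ ▸ hw).2]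
    exact ⟨_, _, .nil _, h, p⟩

theorem mem_evalFrom_iff {A : εNFA α σ} {t : σ} (w : List α) (S : Set σ) :
    t ∈ A.evalFrom S w ↔ ∃ s ∈ S, EPath A s t w := by
  induction w generalizing S with
  | nil => simpa using mem_εClosure_iff
  | cons a w ih =>
    have hev : A.evalFrom S (a :: w) = A.evalFrom (A.stepSet (A.εClosure S) a) w := by
      show List.foldl _ _ _ = _
      rw [εNFA.evalFrom, εClosure_stepSet']
      rfl
    rw [hev, ih]
    constructor
    · rintro ⟨u, hu, p⟩
      rw [εNFA.mem_stepSet_iff] at hu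
      obtain ⟨v, hv, hc⟩ := hu
      obtain ⟨s, hs, pv⟩ := mem_εClosure_iff.1 hv
      obtain ⟨u0, hu0, pu⟩ := mem_εClosure_iff.1 hc
      exact ⟨s, hs, by simpa using pv.trans (EPath.cons hu0 (pu.trans p))⟩
    · rintro ⟨s, hs, p⟩
      obtain ⟨v, u, p1, hstep, p2⟩ := epath_cons p rfl
      refine ⟨u, ?_, p2⟩
      rw [εNFA.mem_stepSet_iff]
      exact ⟨v, mem_εClosure_iff.2 ⟨s, hs, p1⟩, εNFA.subset_εClosure _ _ hstep⟩

theorem accepts_iff {A : εNFA α σ} {w : List α} :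
    w ∈ A.accepts ↔ ∃ s ∈ A.start, ∃ t ∈ A.accept, EPath A s t w := by
  show (∃ t ∈ A.accept, t ∈ A.evalFrom A.start w) ↔ _
  simp only [mem_evalFrom_iff]
  tauto

theorem EPath.map {A : εNFA α σ} {B : εNFA α σ'} (f : σ → σ')
    (hf : ∀ s x t, t ∈ A.step s x → f t ∈ B.step (f s) x)
    {s t : σ} {w : List α} (p : EPath A s t w) : EPath B (f s) (f t) w := by
  induction p with
  | nil => exact .nil _
  | eps h _ ih => exact .eps (hf _ _ _ h) ih
  | cons h _ ih => exact .cons (hf _ _ _ h) ih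

variable {α : Type} {σ σ' : Type}

structure Th (α : Type) (σ : Type) where
  trans : List (σ × Option α × σ)
  start : σ
  accept : σ

def Th.toεNFA (M : Th α σ) : εNFA α σ :=
  ⟨fun s x => {t | (s, x, t) ∈ M.trans}, {M.start}, {M.accept}⟩

@[simp] theorem Th.mem_step {M : Th α σ} {s : σ} {x : Option α} {t : σ} :
    t ∈ M.toεNFA.step s x ↔ (s, x, t) ∈ M.trans := Iff.rfl

def lift (f : σ → σ') (l : List (σ × Option α × σ)) : List (σ' × Option α × σ') :=
  l.map fun p => (f p.1, p.2.1, f p.2.2)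

@[simp] theorem mem_lift {f : σ → σ'} {l : List (σ × Option α × σ)} {q : σ' × Option α × σ'} :
    q ∈ lift f l ↔ ∃ p ∈ l, (f p.1, p.2.1, f p.2.2) = q := by
  simp [lift]

@[simp] theorem length_lift {f : σ → σ'} {l : List (σ × Option α × σ)} :
    (lift f l).length = l.length := by simp [lift]

def thZero : Th α Bool := ⟨[], false, true⟩
def thEps : Th α Bool := ⟨[(false, none, true)], false, true⟩
def thChar (a : α) : Th α Bool := ⟨[(false, some a, true)], false, true⟩

def thPlus (S : Th α σ) (T : Th α σ') : Th α (Bool ⊕ (σ ⊕ σ')) :=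
  ⟨lift (.inr ∘ .inl) S.trans ++ lift (.inr ∘ .inr) T.trans ++
    [(.inl false, none, .inr (.inl S.start)), (.inl false, none, .inr (.inr T.start)),
     (.inr (.inl S.accept), none, .inl true), (.inr (.inr T.accept), none, .inl true)],
   .inl false, .inl true⟩

def thComp (S : Th α σ) (T : Th α σ') : Th α (σ ⊕ σ') :=
  ⟨lift .inl S.trans ++ lift .inr T.trans ++ [(.inl S.accept, none, .inr T.start)],
   .inl S.start, .inr T.accept⟩

def thStar (S : Th α σ) : Th α (σ ⊕ Bool) :=
  ⟨lift .inl S.trans ++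
    [(.inr false, none, .inr true), (.inr false, none, .inl S.start),
     (.inl S.accept, none, .inr true), (.inl S.accept, none, .inl S.start)],
   .inr false, .inr true⟩

/-- The language of a `Th` machine via paths. -/
theorem Th.accepts_eq (M : Th α σ) :
    M.toεNFA.accepts = {w | EPath M.toεNFA M.start M.accept w} := by
  ext w
  rw [accepts_iff]
  change _ ↔ EPath M.toεNFA M.start M.accept w
  constructor
  · rintro ⟨s, hs, t, ht, p⟩
    obtain rfl : s = M.start := hs
    obtain rfl : t = M.accept := ht
    exact p
  · intro p
    exact ⟨M.start, rfl, M.accept, rfl, p⟩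

variable {α : Type} {σ σ' : Type}

theorem thZero_correct : (thZero : Th α Bool).toεNFA.accepts = 0 := by
  have key : ∀ {x y : Bool} {w : List α}, EPath (thZero : Th α Bool).toεNFA x y w →
      x = y ∧ w = [] := by
    intro x y w p
    induction p with
    | nil => exact ⟨rfl, rfl⟩
    | eps h _ _ => simp [thZero] at h
    | cons h _ _ => simp [thZero] at h
  rw [Th.accepts_eq]
  ext w
  constructor
  · intro p
    have := (key p).1
    simp [thZero] at this
  · intro h
    exact h.elim

theorem thEps_correct : (thEps : Th α Bool).toεNFA.accepts = 1 := by
  have key : ∀ {x y : Bool} {w : List α}, EPath (thEps : Th α Bool).toεNFA x y w →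
      w = [] := by
    intro x y w p
    induction p with
    | nil => rfl
    | eps h _ ih => exact ih
    | cons h _ _ => simp [thEps] at h
  rw [Th.accepts_eq]
  ext w
  simp only [Set.mem_setOf_eq, Language.mem_one]
  constructor
  · exact key
  · rintro rfl
    exact .eps (by simp [thEps]) (.nil _)

theorem thChar_correct (a : α) : (thChar a).toεNFA.accepts = {[a]} := by
  have key : ∀ {x y : Bool} {w : List α}, EPath (thChar a).toεNFA x y w →
      (x = y ∧ w = []) ∨ (x = false ∧ y = true ∧ w = [a]) := by
    intro x y w p
    induction p with
    | nil => exact Or.inl ⟨rfl, rfl⟩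
    | eps h _ _ => simp [thChar] at h
    | cons h _ ih =>
      simp only [Th.mem_step, thChar, List.mem_singleton, Prod.mk.injEq, Option.some.injEq] at h
      obtain ⟨rfl, rfl, rfl⟩ := h
      rcases ih with ⟨rfl, rfl⟩ | ⟨h1, _⟩
      · exact Or.inr ⟨rfl, rfl, rfl⟩
      · simp at h1
  rw [Th.accepts_eq]
  ext w
  constructor
  · intro p
    rcases key p with ⟨h, _⟩ | ⟨_, _, rfl⟩
    · simp [thChar] at h
    · rfl
  · rintro rfl
    exact .cons (by simp [thChar]) (.nil _)

def plusInv (S : Th α σ) (T : Th α σ') : Bool ⊕ (σ ⊕ σ') → List α → Prop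
  | .inl true, w => w = []
  | .inl false, w => EPath S.toεNFA S.start S.accept w ∨ EPath T.toεNFA T.start T.accept w
  | .inr (.inl s), w => EPath S.toεNFA s S.accept w
  | .inr (.inr t), w => EPath T.toεNFA t T.accept w

theorem plus_inv {S : Th α σ} {T : Th α σ'} {x y : Bool ⊕ (σ ⊕ σ')} {w : List α}
    (p : EPath (thPlus S T).toεNFA x y w) (hy : y = .inl true) : plusInv S T x w := by
  induction p with
  | nil => subst hy; simp [plusInv]
  | eps h _ ih =>
    specialize ih hy
    simp only [Th.mem_step, thPlus, List.mem_append, mem_lift, List.mem_cons,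
      List.mem_singleton, Prod.mk.injEq, Function.comp_apply, List.not_mem_nil, or_false] at h
    rcases h with ((⟨⟨s, xx, s'⟩, hmem, hx, hxx, ht⟩ | ⟨⟨s, xx, s'⟩, hmem, hx, hxx, ht⟩) |
        (⟨hx, -, ht⟩ | ⟨hx, -, ht⟩ | ⟨hx, -, ht⟩ | ⟨hx, -, ht⟩))
    · subst hx; subst ht; subst hxx
      exact EPath.eps (by exact hmem) ih
    · subst hx; subst ht; subst hxx
      exact EPath.eps (by exact hmem) ih
    · subst hx; subst ht; exact Or.inl ih
    · subst hx; subst ht; exact Or.inr ih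
    · subst hx; subst ht; exact ih ▸ EPath.nil _
    · subst hx; subst ht; exact ih ▸ EPath.nil _
  | cons h _ ih =>
    specialize ih hy
    simp only [Th.mem_step, thPlus, List.mem_append, mem_lift, List.mem_cons,
      List.mem_singleton, Prod.mk.injEq, Function.comp_apply, List.not_mem_nil, or_false,
      reduceCtorEq, and_false, false_and, or_false] at h
    rcases h with ⟨⟨s, xx, s'⟩, hmem, hx, hxx, ht⟩ | ⟨⟨s, xx, s'⟩, hmem, hx, hxx, ht⟩
    · subst hx; subst ht; subst hxx
      exact EPath.cons (by exact hmem) ih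
    · subst hx; subst ht; subst hxx
      exact EPath.cons (by exact hmem) ih

theorem thPlus_correct (S : Th α σ) (T : Th α σ') :
    (thPlus S T).toεNFA.accepts = S.toεNFA.accepts + T.toεNFA.accepts := by
  rw [Th.accepts_eq, Th.accepts_eq, Th.accepts_eq]
  ext w
  change EPath (thPlus S T).toεNFA (thPlus S T).start (thPlus S T).accept w ↔
    EPath S.toεNFA S.start S.accept w ∨ EPath T.toεNFA T.start T.accept w
  constructor
  · intro p
    exact plus_inv p rfl
  · have hfS : ∀ s x t, t ∈ S.toεNFA.step s x →
        (Sum.inr (Sum.inl t) : Bool ⊕ (σ ⊕ σ')) ∈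
          (thPlus S T).toεNFA.step (.inr (.inl s)) x := by
      intro s x t h
      simp only [Th.mem_step, thPlus, List.mem_append, mem_lift]
      exact Or.inl (Or.inl ⟨(s, x, t), h, rfl⟩)
    have hfT : ∀ s x t, t ∈ T.toεNFA.step s x →
        (Sum.inr (Sum.inr t) : Bool ⊕ (σ ⊕ σ')) ∈
          (thPlus S T).toεNFA.step (.inr (.inr s)) x := by
      intro s x t h
      simp only [Th.mem_step, thPlus, List.mem_append, mem_lift]
      exact Or.inl (Or.inr ⟨(s, x, t), h, rfl⟩)
    rintro (p | p)
    · have h1 : EPath (thPlus S T).toεNFA (.inr (.inl S.start)) (.inl true) w := by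
        simpa using (p.map _ hfS).trans
          (EPath.eps (by simp [thPlus]) (.nil (Sum.inl true)))
      exact EPath.eps (show (Sum.inr (Sum.inl S.start) : Bool ⊕ (σ ⊕ σ')) ∈
        (thPlus S T).toεNFA.step (Sum.inl false) none by simp [thPlus]) h1
    · have h1 : EPath (thPlus S T).toεNFA (.inr (.inr T.start)) (.inl true) w := by
        simpa using (p.map _ hfT).trans
          (EPath.eps (by simp [thPlus]) (.nil (Sum.inl true)))
      exact EPath.eps (show (Sum.inr (Sum.inr T.start) : Bool ⊕ (σ ⊕ σ')) ∈
        (thPlus S T).toεNFA.step (Sum.inl false) none by simp [thPlus]) h1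

variable {α : Type} {σ σ' : Type}

def compInv (S : Th α σ) (T : Th α σ') : σ ⊕ σ' → List α → Prop
  | .inl s, w => ∃ w1 w2, w = w1 ++ w2 ∧ EPath S.toεNFA s S.accept w1 ∧
      EPath T.toεNFA T.start T.accept w2
  | .inr t, w => EPath T.toεNFA t T.accept w

theorem comp_inv {S : Th α σ} {T : Th α σ'} {x y : σ ⊕ σ'} {w : List α}
    (p : EPath (thComp S T).toεNFA x y w) (hy : y = .inr T.accept) : compInv S T x w := by
  induction p with
  | nil => subst hy; exact EPath.nil _
  | eps h _ ih =>
    specialize ih hy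
    simp only [Th.mem_step, thComp, List.mem_append, mem_lift, List.mem_cons,
      List.mem_singleton, Prod.mk.injEq, List.not_mem_nil, or_false] at h
    rcases h with ((⟨⟨s, xx, s'⟩, hmem, hx, hxx, ht⟩ | ⟨⟨s, xx, s'⟩, hmem, hx, hxx, ht⟩) |
        ⟨hx, -, ht⟩)
    · subst hx; subst ht; subst hxx
      obtain ⟨w1, w2, rfl, p1, p2⟩ := ih
      exact ⟨w1, w2, rfl, .eps (by exact hmem) p1, p2⟩
    · subst hx; subst ht; subst hxx
      exact EPath.eps (by exact hmem) ih
    · subst hx; subst ht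
      exact ⟨[], _, rfl, .nil _, ih⟩
  | cons h _ ih =>
    specialize ih hy
    simp only [Th.mem_step, thComp, List.mem_append, mem_lift, List.mem_cons,
      List.mem_singleton, Prod.mk.injEq, List.not_mem_nil, or_false,
      reduceCtorEq, and_false, false_and, or_false] at h
    rcases h with ⟨⟨s, xx, s'⟩, hmem, hx, hxx, ht⟩ | ⟨⟨s, xx, s'⟩, hmem, hx, hxx, ht⟩
    · subst hx; subst ht; subst hxx
      obtain ⟨w1, w2, rfl, p1, p2⟩ := ih
      exact ⟨_ :: w1, w2, rfl, .cons (by exact hmem) p1, p2⟩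
    · subst hx; subst ht; subst hxx
      exact EPath.cons (by exact hmem) ih

theorem thComp_correct (S : Th α σ) (T : Th α σ') :
    (thComp S T).toεNFA.accepts = S.toεNFA.accepts * T.toεNFA.accepts := by
  rw [Th.accepts_eq, Th.accepts_eq, Th.accepts_eq]
  ext w
  refine Iff.trans ?_ Language.mem_mul.symm
  constructor
  · intro p
    obtain ⟨w1, w2, rfl, p1, p2⟩ := comp_inv p rfl
    exact ⟨w1, p1, w2, p2, rfl⟩
  · rintro ⟨w1, p1, w2, p2, rfl⟩
    have hfS : ∀ s x t, t ∈ S.toεNFA.step s x →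
        (Sum.inl t : σ ⊕ σ') ∈ (thComp S T).toεNFA.step (.inl s) x := by
      intro s x t h
      simp only [Th.mem_step, thComp, List.mem_append, mem_lift]
      exact Or.inl (Or.inl ⟨(s, x, t), h, rfl⟩)
    have hfT : ∀ s x t, t ∈ T.toεNFA.step s x →
        (Sum.inr t : σ ⊕ σ') ∈ (thComp S T).toεNFA.step (.inr s) x := by
      intro s x t h
      simp only [Th.mem_step, thComp, List.mem_append, mem_lift]
      exact Or.inl (Or.inr ⟨(s, x, t), h, rfl⟩)
    exact (EPath.map _ hfS p1).trans
      (EPath.eps (by simp [thComp]) (EPath.map _ hfT p2))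

theorem kstar_cons {l : Language α} {a b : List α} (ha : a ∈ l) (hb : b ∈ l∗) :
    a ++ b ∈ l∗ := by
  rw [Language.mem_kstar] at hb ⊢
  obtain ⟨L, rfl, hL⟩ := hb
  refine ⟨a :: L, by simp, ?_⟩
  intro y hy
  rcases List.mem_cons.1 hy with rfl | hy
  · exact ha
  · exact hL y hy

def pathLang (S : Th α σ) : Language α := {w | EPath S.toεNFA S.start S.accept w}

def starInv (S : Th α σ) : σ ⊕ Bool → List α → Prop
  | .inr true, w => w = []
  | .inr false, w => w ∈ (pathLang S)∗
  | .inl s, w => ∃ w1 w2, w = w1 ++ w2 ∧ EPath S.toεNFA s S.accept w1 ∧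
      w2 ∈ (pathLang S)∗

theorem star_inv {S : Th α σ} {x y : σ ⊕ Bool} {w : List α}
    (p : EPath (thStar S).toεNFA x y w) (hy : y = .inr true) : starInv S x w := by
  induction p with
  | nil => subst hy; rfl
  | @eps s t u wv h _ ih =>
    specialize ih hy
    simp only [Th.mem_step, thStar, List.mem_append, mem_lift, List.mem_cons,
      List.mem_singleton, Prod.mk.injEq, List.not_mem_nil, or_false] at h
    rcases h with (⟨⟨s0, xx, s1⟩, hmem, hx, hxx, ht⟩ |
        (⟨hx, -, ht⟩ | ⟨hx, -, ht⟩ | ⟨hx, -, ht⟩ | ⟨hx, -, ht⟩))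
    · subst hx; subst ht; subst hxx
      obtain ⟨w1, w2, rfl, p1, h2⟩ := ih
      exact ⟨w1, w2, rfl, .eps (by exact hmem) p1, h2⟩
    · subst hx; subst ht
      have hv : wv = [] := ih
      subst hv
      exact Language.nil_mem_kstar _
    · subst hx; subst ht
      obtain ⟨w1, w2, rfl, p1, h2⟩ := ih
      exact kstar_cons p1 h2
    · subst hx; subst ht
      have hv : wv = [] := ih
      subst hv
      exact ⟨[], [], rfl, .nil _, Language.nil_mem_kstar _⟩
    · subst hx; subst ht
      obtain ⟨w1, w2, rfl, p1, h2⟩ := ih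
      exact ⟨[], w1 ++ w2, rfl, .nil _, kstar_cons p1 h2⟩
  | cons h _ ih =>
    specialize ih hy
    simp only [Th.mem_step, thStar, List.mem_append, mem_lift, List.mem_cons,
      List.mem_singleton, Prod.mk.injEq, List.not_mem_nil, or_false,
      reduceCtorEq, and_false, false_and, or_false] at h
    obtain ⟨⟨s0, xx, s1⟩, hmem, hx, hxx, ht⟩ := h
    subst hx; subst ht; subst hxx
    obtain ⟨w1, w2, rfl, p1, h2⟩ := ih
    exact ⟨_ :: w1, w2, rfl, .cons (by exact hmem) p1, h2⟩

theorem star_paths (S : Th α σ) (parts : List (List α))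
    (hall : ∀ y ∈ parts, EPath S.toεNFA S.start S.accept y) (x : σ ⊕ Bool)
    (hx : x = .inr false ∨ x = .inl S.accept) :
    EPath (thStar S).toεNFA x (.inr true) parts.flatten := by
  have hfS : ∀ s xx t, t ∈ S.toεNFA.step s xx →
      (Sum.inl t : σ ⊕ Bool) ∈ (thStar S).toεNFA.step (.inl s) xx := by
    intro s xx t h
    simp only [Th.mem_step, thStar, List.mem_append, mem_lift]
    exact Or.inl ⟨(s, xx, t), h, rfl⟩
  induction parts generalizing x with
  | nil =>
    refine EPath.eps ?_ (.nil _)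
    rcases hx with rfl | rfl <;> simp [thStar]
  | cons y ps ih =>
    have hstep : (Sum.inl S.start : σ ⊕ Bool) ∈ (thStar S).toεNFA.step x none := by
      rcases hx with rfl | rfl <;> simp [thStar]
    have pmid : EPath (thStar S).toεNFA (.inl S.start) (.inl S.accept) y :=
      (hall y (by simp)).map _ hfS
    have prest := ih (fun z hz => hall z (by simp [hz])) (.inl S.accept) (Or.inr rfl)
    have := EPath.eps hstep (pmid.trans prest)
    simpa using this

theorem thStar_correct (S : Th α σ) :
    (thStar S).toεNFA.accepts = (S.toεNFA.accepts)∗ := by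
  rw [Th.accepts_eq, Th.accepts_eq]
  ext w
  show _ ↔ w ∈ (pathLang S)∗
  constructor
  · intro p
    exact star_inv p rfl
  · intro hw
    rw [Language.mem_kstar] at hw
    obtain ⟨parts, rfl, hall⟩ := hw
    exact star_paths S parts hall _ (Or.inl rfl)

variable {α : Type}

def stT : RegularExpression α → Type
  | .zero => Bool
  | .epsilon => Bool
  | .char _ => Bool
  | .plus S T => Bool ⊕ (stT S ⊕ stT T)
  | .comp S T => stT S ⊕ stT T
  | .star S => stT S ⊕ Bool

def stTFin : (R : RegularExpression α) → Fintype (stT R)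
  | .zero => inferInstanceAs (Fintype Bool)
  | .epsilon => inferInstanceAs (Fintype Bool)
  | .char _ => inferInstanceAs (Fintype Bool)
  | .plus S T => letI := stTFin S; letI := stTFin T; inferInstanceAs (Fintype (Bool ⊕ _))
  | .comp S T => letI := stTFin S; letI := stTFin T; inferInstanceAs (Fintype (_ ⊕ _))
  | .star S => letI := stTFin S; inferInstanceAs (Fintype (_ ⊕ Bool))

def thR : (R : RegularExpression α) → Th α (stT R)
  | .zero => thZero
  | .epsilon => thEps
  | .char a => thChar a
  | .plus S T => thPlus (thR S) (thR T)
  | .comp S T => thComp (thR S) (thR T)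
  | .star S => thStar (thR S)

theorem fcard_congr {X : Type} (i j : Fintype X) :
    @Fintype.card X i = @Fintype.card X j := by
  rw [Subsingleton.elim i j]

theorem card_le (R : RegularExpression α) :
    @Fintype.card (stT R) (stTFin R) ≤ 2 * reSize R := by
  induction R with
  | zero => simp [stT, stTFin, reSize, fcard_congr _ Bool.fintype]; exact Nat.le_of_ble_eq_true rfl
  | epsilon => simp [stT, stTFin, reSize, fcard_congr _ Bool.fintype]; exact Nat.le_of_ble_eq_true rfl
  | char a => simp [stT, stTFin, reSize, fcard_congr _ Bool.fintype]; exact Nat.le_of_ble_eq_true rfl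
  | plus S T ihS ihT =>
    letI := stTFin S; letI := stTFin T
    have h : @Fintype.card (stT (S.plus T)) (stTFin _) =
        Fintype.card (Bool ⊕ (stT S ⊕ stT T)) := fcard_congr _ _
    rw [h, Fintype.card_sum, Fintype.card_sum, Fintype.card_bool]
    simp only [reSize]
    omega
  | comp S T ihS ihT =>
    letI := stTFin S; letI := stTFin T
    have h : @Fintype.card (stT (S.comp T)) (stTFin _) =
        Fintype.card (stT S ⊕ stT T) := fcard_congr _ _
    rw [h, Fintype.card_sum]
    simp only [reSize]
    omega
  | star S ihS =>
    letI := stTFin S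
    have h : @Fintype.card (stT (S.star)) (stTFin _) =
        Fintype.card (stT S ⊕ Bool) := fcard_congr _ _
    rw [h, Fintype.card_sum, Fintype.card_bool]
    simp only [reSize]
    omega

theorem len_le (R : RegularExpression α) : (thR R).trans.length ≤ 4 * reSize R := by
  induction R with
  | zero => simp [thR, thZero, reSize]; exact Nat.le_of_ble_eq_true rfl
  | epsilon => simp [thR, thEps, reSize]; exact Nat.le_of_ble_eq_true rfl
  | char a => simp [thR, thChar, reSize]; exact Nat.le_of_ble_eq_true rfl
  | plus S T ihS ihT =>
    show (thPlus (thR S) (thR T)).trans.length ≤ _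
    simp only [thR, thPlus, reSize, List.length_append, length_lift, List.length_cons,
      List.length_nil]
    omega
  | comp S T ihS ihT =>
    show (thComp (thR S) (thR T)).trans.length ≤ _
    simp only [thR, thComp, reSize, List.length_append, length_lift, List.length_cons,
      List.length_nil]
    omega
  | star S ihS =>
    show (thStar (thR S)).trans.length ≤ _
    simp only [thR, thStar, reSize, List.length_append, length_lift, List.length_cons,
      List.length_nil]
    omega

theorem thR_correct (R : RegularExpression α) :
    (thR R).toεNFA.accepts = R.matches' := by
  induction R with
  | zero => exact thZero_correct
  | epsilon => exact thEps_correct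
  | char a => exact thChar_correct a
  | plus S T ihS ihT =>
    show (thPlus (thR S) (thR T)).toεNFA.accepts = _
    rw [thPlus_correct, ihS, ihT]; rfl
  | comp S T ihS ihT =>
    show (thComp (thR S) (thR T)).toεNFA.accepts = _
    rw [thComp_correct, ihS, ihT]; rfl
  | star S ihS =>
    show (thStar (thR S)).toεNFA.accepts = _
    rw [thStar_correct, ihS]; rfl

theorem ncard_mem_list_le {β : Type} (l : List β) : {x | x ∈ l}.ncard ≤ l.length := by
  induction l with
  | nil => simp
  | cons a l ih =>
    have h : {x | x ∈ a :: l} = insert a {x | x ∈ l} := by ext x; simp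
    rw [h, List.length_cons]
    exact le_trans (Set.ncard_insert_le _ _) (by omega)

end ThompsonAux

theorem thompson_size_bounds {α : Type} (R : RegularExpression α) :
    ∃ (σ : Type) (_ : Fintype σ) (A : εNFA α σ),
      Fintype.card σ ≤ 2 * reSize R ∧
      {p : σ × (Option α) × σ | p.2.2 ∈ A.step p.1 p.2.1}.Finite ∧
      {p : σ × (Option α) × σ | p.2.2 ∈ A.step p.1 p.2.1}.ncard ≤ 4 * reSize R ∧
      A.accepts = R.matches' := by
  open ThompsonAux in
  refine ⟨stT R, stTFin R, (thR R).toεNFA, card_le R, ?_⟩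
  have hset : {p : stT R × (Option α) × stT R | p.2.2 ∈ ((thR R).toεNFA).step p.1 p.2.1}
      = {p | p ∈ (thR R).trans} := by
    ext ⟨s, x, t⟩; rfl
  rw [hset]
  exact ⟨(thR R).trans.finite_toSet, le_trans (ncard_mem_list_le _) (len_le R),
    thR_correct R⟩
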